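/- Let γ > 0, K > 0, and let σ : [a,b] → ℝ be measurable. Suppose (x, y) solves the SIR system x'(t) = -γ σ(t) x(t) y(t), y'(t) = γ σ(t) x(t) y(t) - γ y(t) on [a,b] with x(t) > 0 and y(t) = K for all t ∈ [a,b]. Then σ(t) x(t) = 1 for almost every t ∈ [a,b], x(t) = x(a) - γ K (t - a) for all t ∈ [a,b], and consequently σ(t) = 1/(x(a) - γ K (t - a)) for almost every t ∈ [a,b]. -/

import Mathlib

open Set MeasureTheory

/-- On a boundary arc where `y ≡ K`, the boundary control satisfies `σ(t) x(t) = 1`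
a.e., the susceptible fraction is affine, `x(t) = x(a) - γ K (t - a)`, and hence
`σ(t) = 1 / (x(a) - γ K (t - a))` a.e. -/
theorem boundary_arc_control
    (γ K a b : ℝ) (hγ : 0 < γ) (hK : 0 < K)
    (σ x y : ℝ → ℝ) (hσmeas : Measurable σ)
    (hx : ∀ t ∈ Icc a b, HasDerivWithinAt x (-γ * σ t * x t * y t) (Icc a b) t)
    (hy : ∀ t ∈ Icc a b,
      HasDerivWithinAt y (γ * σ t * x t * y t - γ * y t) (Icc a b) t)
    (hxpos : ∀ t ∈ Icc a b, 0 < x t)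
    (hyK : ∀ t ∈ Icc a b, y t = K) :
    (∀ᵐ t ∂(volume.restrict (Icc a b)), σ t * x t = 1) ∧
    (∀ t ∈ Icc a b, x t = x a - γ * K * (t - a)) ∧
    (∀ᵐ t ∂(volume.restrict (Icc a b)), σ t = 1 / (x a - γ * K * (t - a))) := by
  rcases lt_or_ge a b with hab | hab
  · -- main case a < b
    have hud : UniqueDiffOn ℝ (Icc a b) := uniqueDiffOn_Icc hab
    -- σ t * x t = 1 for all t in Icc
    have hσx : ∀ t ∈ Icc a b, σ t * x t = 1 := by
      intro t ht
      have h0 : HasDerivWithinAt y 0 (Icc a b) t :=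
        (hasDerivWithinAt_const t _ K).congr (fun u hu => hyK u hu) (hyK t ht)
      have e1 := (hy t ht).derivWithin (hud t ht)
      have e2 := h0.derivWithin (hud t ht)
      have h3 : γ * σ t * x t * y t - γ * y t = 0 := e1.symm.trans e2
      rw [hyK t ht] at h3
      have hγK : (0:ℝ) < γ * K := by positivity
      have h4 : γ * K * (σ t * x t - 1) = 0 := by linarith [h3]; 
      rcases mul_eq_zero.mp h4 with h | h
      · exact absurd h (ne_of_gt hγK)
      · linarith
    have hxaff : ∀ t ∈ Icc a b, x t = x a - γ * K * (t - a) := by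
      have hder : ∀ t ∈ Icc a b,
          HasDerivWithinAt (fun u => x u + γ * K * u) 0 (Icc a b) t := by
        intro t ht
        have h1 := hx t ht
        have h2 : HasDerivWithinAt (fun u => γ * K * u) (γ * K) (Icc a b) t :=
          ((hasDerivWithinAt_id t _).const_mul (γ * K)).congr_deriv (by ring)
        have : HasDerivWithinAt (fun u => x u + γ * K * u) (-γ * σ t * x t * y t + γ * K) (Icc a b) t := h1.add h2
        convert this using 1
        rw [hyK t ht]
        linear_combination (γ * K) * (hσx t ht)
      have hconst : ∀ t ∈ Icc a b, x t + γ * K * t = x a + γ * K * a := by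
        intro t ht
        have hdiff : DifferentiableOn ℝ (fun u => x u + γ * K * u) (Icc a b) :=
          fun u hu => (hder u hu).differentiableWithinAt
        have hdz : ∀ u ∈ Ico a b, derivWithin (fun v => x v + γ * K * v) (Icc a b) u = 0 := by
          intro u hu
          exact (hder u (Ico_subset_Icc_self hu)).derivWithin (hud u (Ico_subset_Icc_self hu))
        exact constant_of_derivWithin_zero hdiff hdz t ht
      intro t ht
      have := hconst t ht
      linarith
    refine ⟨?_, hxaff, ?_⟩
    · filter_upwards [ae_restrict_mem measurableSet_Icc] with t ht using hσx t ht
    · filter_upwards [ae_restrict_mem measurableSet_Icc] with t ht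
      have hx1 := hσx t ht
      have hxp := hxpos t ht
      have hxv := hxaff t ht
      rw [← hxv]
      field_simp
      linarith [mul_comm (σ t) (x t)]
  · -- degenerate case b ≤ a
    rcases eq_or_lt_of_le hab with heq | hlt
    · subst heq
      have h0 : volume.restrict (Icc b b) = 0 := by
        rw [Measure.restrict_eq_zero]
        simp
      refine ⟨?_, ?_, ?_⟩
      · rw [h0]; simp
      · intro t ht
        simp [Icc_self] at ht
        subst ht; ring
      · rw [h0]; simp
    · have hempty : Icc a b = ∅ := Icc_eq_empty (not_le.mpr hlt)
      refine ⟨?_, ?_, ?_⟩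
      · rw [hempty]; simp
      · intro t ht; rw [hempty] at ht; exact absurd ht (notMem_empty t)
      · rw [hempty]; simp
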